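/- Let a ≤ b be real numbers and let c : ℝ → EuclideanSpace ℝ (Fin 3) be continuously differentiable on [a,b] with ‖c(t)‖ ≥ 1 for all t ∈ [a,b] and ‖c(a)‖ = ‖c(b)‖ = 1. Then the length of c is at least the spherical (great-circle) distance between its endpoints: ∫_a^b ‖c'(t)‖ dt ≥ arccos ⟪c(a), c(b)⟫. -/

import Mathlib

open Set
open scoped RealInnerProductSpace

local notation "E" => EuclideanSpace ℝ (Fin 3)

private lemma hasDerivAt_q9 (u : E) (c c' : ℝ → E) (x : ℝ) (hc : HasDerivAt c (c' x) x)
    (hne : ‖c x‖ ≠ 0) :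
    HasDerivAt (fun t => ⟪u, c t⟫ / ‖c t‖)
      ((⟪u, c' x⟫ - (⟪u, c x⟫ / ‖c x‖) * (⟪c x, c' x⟫ / ‖c x‖)) / ‖c x‖) x := by
  have h1 : HasDerivAt (fun t => ⟪u, c t⟫) ⟪u, c' x⟫ x := by
    simpa using (hasDerivAt_const x u).inner ℝ hc
  have h2 : HasDerivAt (fun t => ‖c t‖) (⟪c x, c' x⟫ / ‖c x‖) x := by
    have h3 : HasDerivAt (fun t => Real.sqrt (‖c t‖ ^ 2))
        ((2 * ⟪c x, c' x⟫) / (2 * Real.sqrt (‖c x‖ ^ 2))) x :=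
      (hc.norm_sq).sqrt (pow_ne_zero _ hne)
    have he : (fun t => Real.sqrt (‖c t‖ ^ 2)) = fun t => ‖c t‖ :=
      funext fun t => Real.sqrt_sq (norm_nonneg _)
    rw [he] at h3
    convert h3 using 1
    rw [Real.sqrt_sq (norm_nonneg _)]
    rw [mul_div_mul_left _ _ (two_ne_zero)]
  have h : HasDerivAt (fun t => ⟪u, c t⟫ / ‖c t‖) _ x := h1.div h2 hne
  convert h using 1
  field_simp

private lemma q_bound9 (u v w : E) (hu : ‖u‖ = 1) (hv : 1 ≤ ‖v‖) :
    |(⟪u, w⟫ - (⟪u, v⟫ / ‖v‖) * (⟪v, w⟫ / ‖v‖)) / ‖v‖|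
      ≤ Real.sqrt (1 - (⟪u, v⟫ / ‖v‖) ^ 2) * ‖w‖ := by
  set r : ℝ := ‖v‖ with hr_def
  have hr : (0:ℝ) < r := lt_of_lt_of_le one_pos hv
  set q : ℝ := ⟪u, v⟫ / r with hq_def
  set W : E := u - (q / r) • v with hW_def
  have hWin : ⟪W, w⟫ = ⟪u, w⟫ - (q / r) * ⟪v, w⟫ := by
    rw [hW_def, inner_sub_left, real_inner_smul_left]
  have hnum : (⟪u, w⟫ - (⟪u, v⟫ / ‖v‖) * (⟪v, w⟫ / ‖v‖)) = ⟪W, w⟫ := by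
    rw [hWin, hq_def]; ring
  have hWnorm : ‖W‖ ^ 2 = 1 - q ^ 2 := by
    have h1 : ⟪u, v⟫ = q * r := by rw [hq_def, div_mul_cancel₀ _ hr.ne']
    have h2 : ⟪v, v⟫ = r ^ 2 := by rw [real_inner_self_eq_norm_sq]
    have h3 : ⟪u, u⟫ = 1 := by rw [real_inner_self_eq_norm_sq, hu]; norm_num
    have h5 : ‖W‖ ^ 2 = ⟪W, W⟫ := (real_inner_self_eq_norm_sq W).symm
    have h4 : ⟪v, u⟫ = q * r := by rw [real_inner_comm]; exact h1
    rw [h5, hW_def]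
    simp only [inner_sub_left, inner_sub_right, real_inner_smul_left, real_inner_smul_right]
    rw [h1, h2, h3, h4]
    field_simp
    ring
  have hWle : ‖W‖ = Real.sqrt (1 - q ^ 2) := by
    rw [← hWnorm, Real.sqrt_sq (norm_nonneg _)]
  rw [hnum, abs_div, abs_of_pos hr]
  calc |⟪W, w⟫| / r ≤ ‖W‖ * ‖w‖ / r := by
        gcongr
        exact abs_real_inner_le_norm W w
    _ ≤ ‖W‖ * ‖w‖ := div_le_self (by positivity) hv
    _ = Real.sqrt (1 - q ^ 2) * ‖w‖ := by rw [hWle]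

private lemma arccos_anti9 {x y : ℝ} (h : x ≤ y) : Real.arccos y ≤ Real.arccos x := by
  rw [Real.arccos_eq_pi_div_two_sub_arcsin, Real.arccos_eq_pi_div_two_sub_arcsin]
  have := Real.monotone_arcsin h
  linarith

private lemma main_aux9 {a b : ℝ} (hab : a ≤ b)
    (c c' : ℝ → E)
    (hderiv : ∀ t ∈ Icc a b, HasDerivAt c (c' t) t)
    (hcont : ContinuousOn c' (Icc a b))
    (hout : ∀ t ∈ Icc a b, 1 ≤ ‖c t‖)
    (ha : ‖c a‖ = 1) (hb : ‖c b‖ = 1)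
    {δ : ℝ} (hδ : 0 < δ)
    (hπ : (∫ t in a..b, ‖c' t‖) + δ * (b - a) + δ ≤ Real.pi) :
    Real.arccos ⟪c a, c b⟫ ≤ (∫ t in a..b, ‖c' t‖) + δ * (b - a) + δ := by
  set u := c a with hu_def
  set q : ℝ → ℝ := fun t => ⟪u, c t⟫ / ‖c t‖ with hq_def
  set s : ℝ → ℝ := fun t => ∫ x in a..t, ‖c' x‖ with hs_def
  set σ : ℝ → ℝ := fun t => s t + δ * (t - a) + δ with hσ_def
  set B : ℝ → ℝ := fun t => 1 - Real.cos (σ t) with hB_def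
  set f : ℝ → ℝ := fun t => 1 - q t with hf_def
  set g : ℝ → ℝ := fun x =>
      -((⟪u, c' x⟫ - (⟪u, c x⟫ / ‖c x‖) * (⟪c x, c' x⟫ / ‖c x‖)) / ‖c x‖) with hg_def
  have hcpos : ∀ t ∈ Icc a b, (0:ℝ) < ‖c t‖ := fun t ht => lt_of_lt_of_le one_pos (hout t ht)
  have hcC : ContinuousOn c (Icc a b) := fun t ht => (hderiv t ht).continuousAt.continuousWithinAt
  have hnormC : ContinuousOn (fun t => ‖c' t‖) (Icc a b) := hcont.norm
  have huIcc : uIcc a b = Icc a b := uIcc_of_le hab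
  have hInt : IntervalIntegrable (fun t => ‖c' t‖) MeasureTheory.volume a b := by
    apply ContinuousOn.intervalIntegrable; rwa [huIcc]
  -- derivative of f
  have hfderiv : ∀ x ∈ Icc a b, HasDerivAt f (g x) x := by
    intro x hx
    have h := hasDerivAt_q9 u c c' x (hderiv x hx) (ne_of_gt (hcpos x hx))
    exact h.const_sub 1
  have hgbound : ∀ x ∈ Icc a b, |g x| ≤ Real.sqrt (1 - q x ^ 2) * ‖c' x‖ := by
    intro x hx
    rw [hg_def]
    simp only [abs_neg]
    exact q_bound9 u (c x) (c' x) ha (hout x hx)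
  -- continuity
  have hqC : ContinuousOn q (Icc a b) :=
    ContinuousOn.div (continuousOn_const.inner hcC) hcC.norm
      (fun t ht => ne_of_gt (hcpos t ht))
  have hfC : ContinuousOn f (Icc a b) := continuousOn_const.sub hqC
  have hsC : ContinuousOn s (Icc a b) := by
    have h := intervalIntegral.continuousOn_primitive_interval
      (μ := MeasureTheory.volume) (a := a) (b := b) (f := fun t => ‖c' t‖) ?_
    · rwa [huIcc] at h
    · rw [huIcc]; exact hnormC.integrableOn_Icc
  have hσC : ContinuousOn σ (Icc a b) := by
    apply ContinuousOn.add
    apply ContinuousOn.add hsC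
    · exact (continuous_const.mul (continuous_id.sub continuous_const)).continuousOn
    · exact continuousOn_const
  have hBC : ContinuousOn B (Icc a b) :=
    continuousOn_const.sub (Real.continuous_cos.comp_continuousOn hσC)
  -- integral bounds
  have hsub : ∀ x ∈ Icc a b, IntervalIntegrable (fun t => ‖c' t‖) MeasureTheory.volume a x := by
    intro x hx
    apply hInt.mono_set
    rw [huIcc, uIcc_of_le hx.1]
    exact Icc_subset_Icc le_rfl hx.2
  have hsub2 : ∀ x ∈ Icc a b, IntervalIntegrable (fun t => ‖c' t‖) MeasureTheory.volume x b := by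
    intro x hx
    apply hInt.mono_set
    rw [huIcc, uIcc_of_le hx.2]
    exact Icc_subset_Icc hx.1 le_rfl
  have hs0 : ∀ x ∈ Icc a b, 0 ≤ s x := by
    intro x hx
    exact intervalIntegral.integral_nonneg hx.1 (fun t _ => norm_nonneg _)
  have hs_le : ∀ x ∈ Icc a b, s x ≤ s b := by
    intro x hx
    have hadd := intervalIntegral.integral_add_adjacent_intervals (hsub x hx) (hsub2 x hx)
    have hpos : (0:ℝ) ≤ ∫ t in x..b, ‖c' t‖ :=
      intervalIntegral.integral_nonneg hx.2 (fun t _ => norm_nonneg _)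
    have : s b = s x + ∫ t in x..b, ‖c' t‖ := hadd.symm
    linarith
  have hσpos : ∀ x ∈ Icc a b, 0 < σ x := by
    intro x hx
    have h1 := hs0 x hx
    have h2 : 0 ≤ δ * (x - a) := mul_nonneg hδ.le (by linarith [hx.1])
    simp only [hσ_def]
    linarith
  have hσb : σ b ≤ Real.pi := hπ
  have hσlt : ∀ x ∈ Ico a b, σ x < σ b := by
    intro x hx
    have h1 := hs_le x (Ico_subset_Icc_self hx)
    have h2 : δ * (x - a) < δ * (b - a) := by
      apply mul_lt_mul_of_pos_left _ hδ
      linarith [hx.2]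
    simp only [hσ_def]
    linarith
  -- right derivative of B
  have hB'deriv : ∀ x ∈ Ico a b,
      HasDerivWithinAt B (Real.sin (σ x) * (‖c' x‖ + δ)) (Ici x) x := by
    intro x hx
    have hxI : x ∈ Icc a b := Ico_subset_Icc_self hx
    have hmem : Icc a b ∈ nhdsWithin x (Ioi x) := by
      apply Filter.mem_of_superset (Ioo_mem_nhdsGT_of_mem (⟨le_rfl, hx.2⟩ : x ∈ Ico x b))
      exact fun z hz => ⟨le_trans hxI.1 hz.1.le, hz.2.le⟩
    have hmeas : StronglyMeasurableAtFilter (fun t => ‖c' t‖) (nhdsWithin x (Ioi x)) :=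
      ⟨Icc a b, hmem, hnormC.aestronglyMeasurable measurableSet_Icc⟩
    have hcw : ContinuousWithinAt (fun t => ‖c' t‖) (Ioi x) x :=
      (hnormC x hxI).mono_of_mem_nhdsWithin hmem
    have hsd : HasDerivWithinAt s (‖c' x‖) (Ici x) x :=
      intervalIntegral.integral_hasDerivWithinAt_right (hsub x hxI) hmeas hcw
    have hlin : HasDerivWithinAt (fun t : ℝ => δ * (t - a)) δ (Ici x) x := by
      simpa using ((hasDerivWithinAt_id x (Ici x)).sub_const a).const_mul δ
    have hσd : HasDerivWithinAt σ (‖c' x‖ + δ) (Ici x) x := by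
      simpa [hσ_def] using (hsd.add hlin).add_const δ
    have hcos := (Real.hasDerivAt_cos (σ x)).comp_hasDerivWithinAt x hσd
    have hB' := hcos.const_sub 1
    have : -(-Real.sin (σ x) * (‖c' x‖ + δ)) = Real.sin (σ x) * (‖c' x‖ + δ) := by ring
    rw [this] at hB'
    exact hB'
  -- fence
  have hfence : ∀ x ∈ Icc a b, f x ≤ B x := by
    apply image_le_of_liminf_slope_right_lt_deriv_boundary' (f' := g) hfC ?_ ?_ hBC hB'deriv ?_
    · -- slope condition
      intro x hx r hr
      have hd : HasDerivAt f (g x) x := hfderiv x (Ico_subset_Icc_self hx)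
      have ht : Filter.Tendsto (slope f x) (nhdsWithin x (Ioi x)) (nhds (g x)) := by
        apply (hasDerivAt_iff_tendsto_slope.1 hd).mono_left
        apply nhdsWithin_mono
        exact fun z hz => ne_of_gt hz
      exact (ht.eventually_lt_const hr).frequently
    · -- initial value
      have hqa : q a = 1 := by
        simp only [hq_def, hu_def, ha]
        rw [real_inner_self_eq_norm_sq, ha]
        norm_num
      have hfa : f a = 0 := by simp [hf_def, hqa]
      have hsa : s a = 0 := intervalIntegral.integral_same
      have hBa : B a = 1 - Real.cos δ := by simp [hB_def, hσ_def, hsa]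
      rw [hfa, hBa]
      have := Real.cos_le_one δ
      linarith
    · -- bound at touching points
      intro x hx hfx
      have hxI : x ∈ Icc a b := Ico_subset_Icc_self hx
      have hq_eq : q x = Real.cos (σ x) := by
        simp only [hf_def, hB_def] at hfx
        linarith
      have h0σ : 0 < σ x := hσpos x hxI
      have hσπ : σ x < Real.pi := lt_of_lt_of_le (hσlt x hx) hσb
      have hsin : 0 < Real.sin (σ x) := Real.sin_pos_of_pos_of_lt_pi h0σ hσπ
      have hsqrt : Real.sqrt (1 - q x ^ 2) = Real.sin (σ x) := by
        rw [hq_eq]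
        have h1 : 1 - Real.cos (σ x) ^ 2 = Real.sin (σ x) ^ 2 := by
          nlinarith [Real.sin_sq_add_cos_sq (σ x)]
        rw [h1, Real.sqrt_sq hsin.le]
      calc g x ≤ |g x| := le_abs_self _
        _ ≤ Real.sqrt (1 - q x ^ 2) * ‖c' x‖ := hgbound x hxI
        _ = Real.sin (σ x) * ‖c' x‖ := by rw [hsqrt]
        _ < Real.sin (σ x) * (‖c' x‖ + δ) := by nlinarith
  -- conclusion
  have hfb := hfence b (right_mem_Icc.2 hab)
  simp only [hf_def, hB_def] at hfb
  have hqb : q b = ⟪c a, c b⟫ := by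
    simp [hq_def, hu_def, hb]
  have hcosle : Real.cos (σ b) ≤ ⟪c a, c b⟫ := by
    rw [← hqb]; linarith
  have harccos : Real.arccos ⟪c a, c b⟫ ≤ Real.arccos (Real.cos (σ b)) := arccos_anti9 hcosle
  have hσb0 : 0 ≤ σ b := (hσpos b (right_mem_Icc.2 hab)).le
  rw [Real.arccos_cos hσb0 hσb] at harccos
  exact harccos


/-- a C¹ curve staying outside the open unit ball of `ℝ³` and joining
two points of the unit sphere is at least as long as the great-circle distance
between its endpoints. -/
theorem stmt9 {a b : ℝ} (hab : a ≤ b)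
    (c c' : ℝ → EuclideanSpace ℝ (Fin 3))
    (hderiv : ∀ t ∈ Icc a b, HasDerivAt c (c' t) t)
    (hcont : ContinuousOn c' (Icc a b))
    (hout : ∀ t ∈ Icc a b, 1 ≤ ‖c t‖)
    (ha : ‖c a‖ = 1) (hb : ‖c b‖ = 1) :
    Real.arccos ⟪c a, c b⟫ ≤ ∫ t in a..b, ‖c' t‖ := by
  set L : ℝ := ∫ t in a..b, ‖c' t‖ with hL_def
  by_cases hcase : Real.pi ≤ L
  · exact le_trans (Real.arccos_le_pi _) hcase
  · push_neg at hcase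
    apply le_of_forall_pos_le_add
    intro η hη
    set δ : ℝ := min η (Real.pi - L) / (b - a + 1) with hδ_def
    have hba : (0:ℝ) < b - a + 1 := by linarith
    have hmin : 0 < min η (Real.pi - L) := lt_min hη (by linarith)
    have hδ : 0 < δ := div_pos hmin hba
    have hδba : δ * (b - a) + δ = min η (Real.pi - L) := by
      rw [hδ_def]
      field_simp
    have hπ : L + δ * (b - a) + δ ≤ Real.pi := by
      have h1 : min η (Real.pi - L) ≤ Real.pi - L := min_le_right _ _
      linarith [hδba, h1]
    have h := main_aux9 hab c c' hderiv hcont hout ha hb hδ hπ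
    have h2 : min η (Real.pi - L) ≤ η := min_le_left _ _
    linarith [hδba, h2]
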